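/- The partial order (W, ≤_W) of finite prefix-antichains of binary words is universal: every countable partial order embeds into it as an induced suborder. -/

import Mathlib

/-- A finite set of binary words is an antichain w.r.t. the prefix order. -/
def IsAntichainW (A : Finset (List Bool)) : Prop :=
  ∀ w ∈ A, ∀ w' ∈ A, w' <+: w → w = w'

/-- `A ≤_W B` iff every word of `A` has a prefix in `B`. -/
def WleW (A B : Finset (List Bool)) : Prop :=
  ∀ w ∈ A, ∃ w' ∈ B, w' <+: w

namespace WUniv

variable {P : Type} [PartialOrder P]

/-! ### Clopen subsets of Cantor space realizing the order

To each `x : P` (through an injective enumeration `e : P → ℕ`) we attach a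
clopen subset `Fc e (e x)` of Cantor space `ℕ → Bool`, built by recursion on
the index, such that `Fc e (e x) ⊆ Fc e (e y) ↔ x ≤ y`. -/

/-- `Fc e n` is the clopen set attached to the element of index `n` (empty if none):
the union of the sets of all earlier elements below `x`, together with a fresh piece
(coordinate `n` equal to `true`) inside the intersection of the sets of all earlier
elements above `x`. It only depends on coordinates `≤ n`. -/
def Fc (e : P → ℕ) : ℕ → (ℕ → Bool) → Prop := fun n s =>
  ∃ x : P, e x = n ∧
    ((∃ z : P, ∃ _ : e z < n, z ≤ x ∧ Fc e (e z) s) ∨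
     (s n = true ∧ ∀ z : P, e z < n → x ≤ z → Fc e (e z) s))
termination_by n _ => n

/-- `Fc e n` only depends on coordinates `≤ n`. -/
lemma Fc_det (e : P → ℕ) : ∀ n, ∀ s t : ℕ → Bool,
    (∀ i, i ≤ n → s i = t i) → Fc e n s → Fc e n t := by
  intro n
  induction n using Nat.strong_induction_on with
  | _ n ih =>
    intro s t hst h
    rw [Fc] at h ⊢
    obtain ⟨x, hx, h⟩ := h
    refine ⟨x, hx, ?_⟩
    rcases h with ⟨z, hz, hzx, hs⟩ | ⟨hsn, hall⟩
    · exact Or.inl ⟨z, hz, hzx, ih _ hz _ _ (fun i hi => hst i (le_of_lt (lt_of_le_of_lt hi hz))) hs⟩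
    · refine Or.inr ⟨(hst n le_rfl) ▸ hsn, fun z hz hxz => ?_⟩
      exact ih _ hz _ _ (fun i hi => hst i (le_of_lt (lt_of_le_of_lt hi hz))) (hall z hz hxz)

/-- Monotonicity: `x ≤ y` implies `Fc e (e x) ⊆ Fc e (e y)`. -/
lemma Fc_mono (e : P → ℕ) (he : Function.Injective e) :
    ∀ n, ∀ x y : P, e x < n → e y < n → x ≤ y →
      ∀ s, Fc e (e x) s → Fc e (e y) s := by
  intro n
  induction n using Nat.strong_induction_on with
  | _ n ih =>
    intro x y hx hy hxy s hs
    rcases lt_trichotomy (e x) (e y) with h | h | h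
    · rw [Fc]
      exact ⟨y, rfl, Or.inl ⟨x, h, hxy, hs⟩⟩
    · rwa [he h] at hs
    · rw [Fc] at hs
      obtain ⟨x', hx', hcase⟩ := hs
      have hxx : x' = x := he hx'
      rw [hxx] at hcase
      rcases hcase with ⟨z, hz, hzx, hzs⟩ | ⟨_, hall⟩
      · exact ih (e x) hx z y hz h (le_trans hzx hxy) s hzs
      · exact hall y h hxy

/-- Separation: consistent finite (indeed arbitrary, bounded-index) constraints
are satisfiable. -/
lemma Fc_sep (e : P → ℕ) (he : Function.Injective e) :
    ∀ n, ∀ U V : Set P, (∀ y ∈ U, e y < n) → (∀ y ∈ V, e y < n) →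
      (∀ y ∈ U, ∀ y' ∈ V, ¬ y ≤ y') →
      ∃ s, (∀ y ∈ U, Fc e (e y) s) ∧ (∀ y' ∈ V, ¬ Fc e (e y') s) := by
  intro n
  induction n with
  | zero =>
    intro U V hU hV _
    exact ⟨fun _ => false, fun y hy => absurd (hU y hy) (by omega),
      fun y hy => absurd (hV y hy) (by omega)⟩
  | succ n ih =>
    intro U V hU hV hUV
    by_cases hxU : ∃ x ∈ U, e x = n
    · obtain ⟨x, hxU, hxn⟩ := hxU
      have hxV : x ∉ V := fun h => hUV x hxU x h le_rfl
      obtain ⟨s, hsU, hsV⟩ := ih ({y ∈ U | y ≠ x} ∪ {z | e z < n ∧ x ≤ z}) V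
        (by rintro y (⟨hy, hyx⟩ | ⟨h1, _⟩)
            · have := hU y hy
              have : e y ≠ n := fun h => hyx (he (h.trans hxn.symm))
              omega
            · exact h1)
        (by intro y hy
            have := hV y hy
            have : e y ≠ n := fun h => hxV ((he (h.trans hxn.symm)) ▸ hy)
            omega)
        (by rintro y (⟨hy, _⟩ | ⟨_, hxy⟩) y' hy'
            · exact hUV y hy y' hy'
            · exact fun hyy' => hUV x hxU y' hy' (le_trans hxy hyy'))
      refine ⟨Function.update s n true, ?_, ?_⟩
      · intro y hy
        by_cases hyx : y = x
        · subst hyx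
          rw [hxn, Fc]
          refine ⟨y, hxn, Or.inr ⟨Function.update_self _ _ _, fun z hz hyz => ?_⟩⟩
          have hzs : Fc e (e z) s := hsU z (Or.inr ⟨hz, hyz⟩)
          exact Fc_det e (e z) s _ (fun i hi => (Function.update_of_ne (by omega) _ _).symm) hzs
        · have hy' : e y < n := by
            have := hU y hy
            have : e y ≠ n := fun h => hyx (he (h.trans hxn.symm))
            omega
          exact Fc_det e (e y) s _ (fun i hi => (Function.update_of_ne (by omega) _ _).symm)
            (hsU y (Or.inl ⟨hy, hyx⟩))
      · intro y' hy'
        have hy'n : e y' < n := by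
          have := hV y' hy'
          have : e y' ≠ n := fun h => hxV ((he (h.trans hxn.symm)) ▸ hy')
          omega
        intro hFc
        exact hsV y' hy' (Fc_det e (e y') _ s (fun i hi => Function.update_of_ne (by omega) _ _) hFc)
    · by_cases hxV : ∃ x ∈ V, e x = n
      · obtain ⟨x, hxV, hxn⟩ := hxV
        obtain ⟨s, hsU, hsV⟩ := ih U ({y ∈ V | y ≠ x} ∪ {z | e z < n ∧ z ≤ x})
          (by intro y hy
              have := hU y hy
              have : e y ≠ n := fun h => hxU ⟨y, hy, h⟩
              omega)
          (by rintro y (⟨hy, hyx⟩ | ⟨h1, _⟩)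
              · have := hV y hy
                have : e y ≠ n := fun h => hyx (he (h.trans hxn.symm))
                omega
              · exact h1)
          (by rintro y hy y' (⟨hy', _⟩ | ⟨_, hy'x⟩)
              · exact hUV y hy y' hy'
              · exact fun hyy' => hUV y hy x hxV (le_trans hyy' hy'x))
        refine ⟨Function.update s n false, ?_, ?_⟩
        · intro y hy
          have hy' : e y < n := by
            have := hU y hy
            have : e y ≠ n := fun h => hxU ⟨y, hy, h⟩
            omega
          exact Fc_det e (e y) s _ (fun i hi => (Function.update_of_ne (by omega) _ _).symm)
            (hsU y hy)
        · intro y' hy'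
          by_cases hyx : y' = x
          · subst hyx
            rw [hxn, Fc]
            rintro ⟨x', hx', hcase⟩
            have hxx : x' = y' := he (hx'.trans hxn.symm)
            rw [hxx] at hcase
            rcases hcase with ⟨z, hz, hzx, hzs⟩ | ⟨htrue, _⟩
            · have : ¬ Fc e (e z) s := hsV z (Or.inr ⟨hz, hzx⟩)
              exact this (Fc_det e (e z) _ s (fun i hi => Function.update_of_ne (by omega) _ _) hzs)
            · simp [Function.update_self] at htrue
          · have hy'n : e y' < n := by
              have := hV y' hy'
              have : e y' ≠ n := fun h => hyx (he (h.trans hxn.symm))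
              omega
            intro hFc
            exact hsV y' (Or.inl ⟨hy', hyx⟩)
              (Fc_det e (e y') _ s (fun i hi => Function.update_of_ne (by omega) _ _) hFc)
      · refine ih U V ?_ ?_ hUV
        · intro y hy
          have := hU y hy
          have : e y ≠ n := fun h => hxU ⟨y, hy, h⟩
          omega
        · intro y hy
          have := hV y hy
          have : e y ≠ n := fun h => hxV ⟨y, hy, h⟩
          omega

/-- The clopen sets realize the order of `P` by inclusion. -/
lemma Fc_le_iff (e : P → ℕ) (he : Function.Injective e) (x y : P) :
    x ≤ y ↔ (∀ s, Fc e (e x) s → Fc e (e y) s) := by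
  constructor
  · intro hxy s
    exact Fc_mono e he (max (e x) (e y) + 1) x y (by omega) (by omega) hxy s
  · intro h
    by_contra hxy
    obtain ⟨s, hs1, hs2⟩ := Fc_sep e he (max (e x) (e y) + 1) {x} {y}
      (by simp) (by simp) (by simpa using hxy)
    exact hs2 y rfl (h s (hs1 x rfl))

/-! ### From clopen sets to finite prefix-antichains -/

/-- `s` extends the finite word `w`. -/
def ExtW (w : List Bool) (s : ℕ → Bool) : Prop := ∀ i < w.length, s i = w.getD i false

/-- the cylinder of `w` is contained in `C`. -/
def Full (C : (ℕ → Bool) → Prop) (w : List Bool) : Prop := ∀ s, ExtW w s → C s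

lemma ExtW.of_prefix {u w : List Bool} (h : u <+: w) {s : ℕ → Bool} (hs : ExtW w s) :
    ExtW u s := by
  intro i hi
  have hiw : i < w.length := lt_of_lt_of_le hi h.length_le
  rw [hs i hiw, List.getD_eq_getElem _ _ hi, List.getD_eq_getElem _ _ hiw, h.getElem hi]

lemma Full.of_prefix {C : (ℕ → Bool) → Prop} {u w : List Bool} (h : u <+: w)
    (hu : Full C u) : Full C w := fun s hs => hu s (hs.of_prefix h)

/-- Minimal full words: `w` is full but no proper prefix of `w` is. -/
def MinW (C : (ℕ → Bool) → Prop) (w : List Bool) : Prop :=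
  Full C w ∧ ∀ v, v <+: w → v ≠ w → ¬ Full C v

lemma exists_min_prefix_aux {C : (ℕ → Bool) → Prop} :
    ∀ n, ∀ w : List Bool, w.length < n → Full C w → ∃ u, u <+: w ∧ MinW C u := by
  intro n
  induction n with
  | zero => intro w h; omega
  | succ n ih =>
    intro w hlen hw
    by_cases h : ∀ v, v <+: w → v ≠ w → ¬ Full C v
    · exact ⟨w, List.prefix_refl w, hw, h⟩
    · push_neg at h
      obtain ⟨v, hvw, hvne, hv⟩ := h
      have hvlen : v.length < w.length :=
        lt_of_le_of_ne hvw.length_le (fun h' => hvne (hvw.eq_of_length h'))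
      obtain ⟨u, huv, hu⟩ := ih v (by omega) hv
      exact ⟨u, huv.trans hvw, hu⟩

/-- Every full word has a minimal full prefix. -/
lemma exists_min_prefix {C : (ℕ → Bool) → Prop} (w : List Bool) (hw : Full C w) :
    ∃ u, u <+: w ∧ MinW C u :=
  exists_min_prefix_aux (w.length + 1) w (by omega) hw

/-- Truncation: if `C` only depends on coordinates `≤ n`, fullness of a long word
descends to its truncation to length `n+1`. -/
lemma full_take {C : (ℕ → Bool) → Prop} {n : ℕ}
    (hdet : ∀ s t : ℕ → Bool, (∀ i, i ≤ n → s i = t i) → C s → C t)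
    {w : List Bool} (hlen : n + 1 ≤ w.length) (hw : Full C w) :
    Full C (w.take (n + 1)) := by
  intro s hs
  set s' : ℕ → Bool := fun i => if h : i < w.length then w.getD i false else s i with hs'
  have hext : ExtW w s' := by
    intro i hi
    simp only [hs', dif_pos hi]
  have hC : C s' := hw s' hext
  refine hdet s' s (fun i hi => ?_) hC
  have hiw : i < w.length := by omega
  have hit : i < (w.take (n + 1)).length := by
    rw [List.length_take]; omega
  have := hs i hit
  rw [List.getD_eq_getElem _ _ hit, List.getElem_take] at this
  simp only [hs', dif_pos hiw]
  rw [this, List.getD_eq_getElem _ _ hiw]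

lemma minW_length {C : (ℕ → Bool) → Prop} {n : ℕ}
    (hdet : ∀ s t : ℕ → Bool, (∀ i, i ≤ n → s i = t i) → C s → C t)
    {w : List Bool} (hw : MinW C w) : w.length ≤ n + 1 := by
  by_contra h
  push_neg at h
  have htake : Full C (w.take (n + 1)) := full_take hdet (by omega) hw.1
  exact hw.2 (w.take (n + 1)) (List.take_prefix _ _)
    (fun h' => by have := congrArg List.length h'; simp [List.length_take] at this; omega) htake

lemma minW_finite (C : (ℕ → Bool) → Prop) (n : ℕ)
    (hdet : ∀ s t : ℕ → Bool, (∀ i, i ≤ n → s i = t i) → C s → C t) :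
    {w : List Bool | MinW C w}.Finite := by
  refine (List.finite_length_le Bool (n + 1)).subset ?_
  intro w hw
  exact minW_length hdet hw

/-- Every point of a determined set extends a minimal full word. -/
lemma exists_minW_extW {C : (ℕ → Bool) → Prop} {n : ℕ}
    (hdet : ∀ s t : ℕ → Bool, (∀ i, i ≤ n → s i = t i) → C s → C t)
    {s : ℕ → Bool} (hs : C s) : ∃ w, MinW C w ∧ ExtW w s := by
  set w0 : List Bool := List.ofFn (fun i : Fin (n + 1) => s i) with hw0
  have hw0len : w0.length = n + 1 := by simp [hw0]
  have hext : ExtW w0 s := by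
    intro i hi
    rw [List.getD_eq_getElem _ _ hi]
    have : w0[i] = s i := by
      simp only [hw0, List.getElem_ofFn]
    rw [this]
  have hfull : Full C w0 := by
    intro t ht
    refine hdet s t (fun i hi => ?_) hs
    have hi' : i < w0.length := by omega
    rw [hext i hi', ht i hi']
  obtain ⟨u, huw, hu⟩ := exists_min_prefix w0 hfull
  exact ⟨u, hu, hext.of_prefix huw⟩

/-- The embedding: `x` is mapped to the (finite) antichain of minimal full words
of its clopen set. -/
noncomputable def phiF (e : P → ℕ) (x : P) : Finset (List Bool) :=
  (minW_finite (Fc e (e x)) (e x) (Fc_det e (e x))).toFinset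

lemma mem_phiF (e : P → ℕ) (x : P) (w : List Bool) :
    w ∈ phiF e x ↔ MinW (Fc e (e x)) w := Set.Finite.mem_toFinset _

lemma phiF_antichain (e : P → ℕ) (x : P) : IsAntichainW (phiF e x) := by
  intro w hw w' hw' hpre
  rw [mem_phiF] at hw hw'
  by_contra hne
  exact hw.2 w' hpre (fun h => hne h.symm) hw'.1

/-- `WleW` between the antichains is equivalent to inclusion of the clopen sets. -/
lemma wleW_phiF_iff (e : P → ℕ) (x y : P) :
    WleW (phiF e x) (phiF e y) ↔ (∀ s, Fc e (e x) s → Fc e (e y) s) := by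
  constructor
  · intro h s hsx
    obtain ⟨w, hmin, hext⟩ := exists_minW_extW (Fc_det e (e x)) hsx
    obtain ⟨w', hw'mem, hw'pre⟩ := h w ((mem_phiF e x w).mpr hmin)
    rw [mem_phiF] at hw'mem
    exact hw'mem.1 s (hext.of_prefix hw'pre)
  · intro h w hw
    rw [mem_phiF] at hw
    have hfull : Full (Fc e (e y)) w := fun s hs => h s (hw.1 s hs)
    obtain ⟨u, huw, hu⟩ := exists_min_prefix w hfull
    exact ⟨u, (mem_phiF e y u).mpr hu, huw⟩

end WUniv

/-- `(W, ≤_W)` is universal: every countable partial order embeds into it. -/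
theorem wleW_universal (P : Type) [PartialOrder P] [Countable P] :
    ∃ φ : P → Finset (List Bool),
      (∀ x, IsAntichainW (φ x)) ∧ Function.Injective φ ∧
      (∀ x y, x ≤ y ↔ WleW (φ x) (φ y)) := by
  obtain ⟨e, he⟩ := Countable.exists_injective_nat P
  refine ⟨WUniv.phiF e, fun x => WUniv.phiF_antichain e x, ?_, fun x y =>
    (WUniv.Fc_le_iff e he x y).trans (WUniv.wleW_phiF_iff e x y).symm⟩
  intro x y h
  have hrefl : ∀ z : P, WleW (WUniv.phiF e z) (WUniv.phiF e z) :=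
    fun z w hw => ⟨w, hw, List.prefix_refl w⟩
  have h1 : x ≤ y := ((WUniv.Fc_le_iff e he x y).trans
    (WUniv.wleW_phiF_iff e x y).symm).mpr (h ▸ hrefl y)
  have h2 : y ≤ x := ((WUniv.Fc_le_iff e he y x).trans
    (WUniv.wleW_phiF_iff e y x).symm).mpr (h ▸ hrefl y)
  exact le_antisymm h1 h2
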